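/- arXiv:2509.01479 — 4 statements merged into one kernel-verified Lean document; each statement's English description precedes it below -/
import Mathlib

section
/- Let 𝓔 = (T, Ω, Act) be an extended transition system, π a trace, i ∈ ℕ a time point, ψ an effect, and A ⊆ B ⊆ Act two sets of actions. Then the cause over A is exactly the set of A-projections of those members of the cause over B that agree with π on B ∖ A: Cause(ψ, π, i, A) = { π″|_A | π″ ∈ Cause(ψ, π, i, B) and π =_{B∖A} π″ }. -/
/-- A transition system `T = (S, S₀, Δ, AP, Λ)`. -/
structure TransSys (S AP : Type*) where
  init : Set S
  delta : S → Set S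
  delta_nonempty : ∀ s, (delta s).Nonempty
  label : S → S → Set AP

namespace TransSys

variable {S AP : Type*}

/-- A path is an infinite sequence of states following the transition function. -/
def IsPath (T : TransSys S AP) (ρ : ℕ → S) : Prop :=
  ∀ i, ρ (i + 1) ∈ T.delta (ρ i)

/-- The trace of a path is the sequence of its edge labels. -/
def traceOf (T : TransSys S AP) (ρ : ℕ → S) : ℕ → Set AP :=
  fun i => T.label (ρ i) (ρ (i + 1))

/-- `Π(T)`: the traces of initial paths. -/
def Traces (T : TransSys S AP) : Set (ℕ → Set AP) :=
  { π | ∃ ρ : ℕ → S, ρ 0 ∈ T.init ∧ T.IsPath ρ ∧ π = T.traceOf ρ }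

end TransSys

variable {S AP AG : Type*}

/-- `π =_A π′` : agreement on `A` at every time point. -/
def agreeOn (A : Set AP) (π π' : ℕ → Set AP) : Prop :=
  ∀ i, π i ∩ A = π' i ∩ A

/-- `π|_A` : projection of a trace to `A`. -/
def restrictTo (A : Set AP) (π : ℕ → Set AP) : ℕ → Set AP :=
  fun i => π i ∩ A

/-- `π ⊕_A π′` : trace-wide symmetric difference restricted to `A`. -/
def symDiff (A : Set AP) (π π' : ℕ → Set AP) : Set (AP × ℕ) :=
  { q | q.1 ∈ A ∧ q.1 ∈ (π q.2 \ π' q.2) ∪ (π' q.2 \ π q.2) }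

/-- `π′ ≤^A_{base} π″` : `π′` is at least as similar to `base` as `π″`, over `A`. -/
def simLE (A : Set AP) (base π' π'' : ℕ → Set AP) : Prop :=
  symDiff A π' base ⊆ symDiff A π'' base

/-- An extended transition system `𝓔 = (T, Ω, Act)`. -/
structure ExtTransSys (S AP AG : Type*) extends TransSys S AP where
  obs : AG → Set AP
  actMap : AG → Set AP
  act_sub_obs : ∀ a, actMap a ⊆ obs a
  act_total : ∀ (s : S) (A : Set AP), A ⊆ (⋃ a, actMap a) →
    ∃ s' ∈ delta s, label s s' ∩ (⋃ a, actMap a) = A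

namespace ExtTransSys

/-- The set of all actions. -/
def Act (E : ExtTransSys S AP AG) : Set AP := ⋃ a, E.actMap a

/-- The temporal cause `Cause(ψ, π, i, A)` of effect `ψ` on trace `π` at time `i` over
actions `A`. -/
def Cause (E : ExtTransSys S AP AG) (ψ : (ℕ → Set AP) → ℕ → Prop)
    (π : ℕ → Set AP) (i : ℕ) (A : Set AP) : Set (ℕ → Set AP) :=
  { π' | (∀ j, π' j ⊆ A) ∧
      ∀ π'' ∈ E.toTransSys.Traces, simLE A π π'' π' → agreeOn (E.Act \ A) π π'' →
        ψ π'' i }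

/-- `π` and `π′` are `a`-indistinguishable up to time `i`. -/
def Indist (E : ExtTransSys S AP AG) (a : AG) (i : ℕ) (π π' : ℕ → Set AP) : Prop :=
  ∀ j ≤ i, π j ∩ E.obs a = π' j ∩ E.obs a

/-- Deterministic extended transition system: unique initial state and for every state and
action set exactly one matching successor. -/
def Deterministic (E : ExtTransSys S AP AG) : Prop :=
  (∃ s₀ : S, E.init = {s₀}) ∧
  ∀ (s : S) (A : Set AP), A ⊆ E.Act →
    ∃! s' : S, s' ∈ E.delta s ∧ E.label s s' ∩ E.Act = A

end ExtTransSys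

/-- `Cause(ψ, π, i, A)` is exactly the set of `A`-projections of the members of
`Cause(ψ, π, i, B)` that agree with `π` on `B ∖ A`. -/
theorem cause_restrict_eq_image [Finite S] [Finite AP] [Finite AG]
    (E : ExtTransSys S AP AG) (ψ : (ℕ → Set AP) → ℕ → Prop)
    (π : ℕ → Set AP) (i : ℕ) (A B : Set AP) (hAB : A ⊆ B) (hB : B ⊆ E.Act) :
    E.Cause ψ π i A =
      restrictTo A '' { π'' ∈ E.Cause ψ π i B | agreeOn (B \ A) π π'' } := by
  ext p
  constructor
  · rintro ⟨hpA, hp⟩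
    refine ⟨fun j => p j ∪ (π j ∩ (B \ A)), ⟨⟨?_, ?_⟩, ?_⟩, ?_⟩
    · intro j x hx
      rcases hx with hx | hx
      · exact hAB (hpA j hx)
      · exact hx.2.1
    · intro π'' hπ'' hsim hagree
      refine hp π'' hπ'' ?_ ?_
      · rintro ⟨a, j⟩ ⟨haA, hd⟩
        have : (a, j) ∈ symDiff B π'' π := ⟨hAB haA, hd⟩
        have h2 := hsim this
        obtain ⟨_, hd2⟩ := h2
        refine ⟨haA, ?_⟩
        rcases hd2 with ⟨h1, h2⟩ | ⟨h1, h2⟩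
        · rcases h1 with h1 | h1
          · exact Or.inl ⟨h1, h2⟩
          · exact absurd h1.2.2 (fun h => h haA)
        · exact Or.inr ⟨h1, fun h => h2 (Or.inl h)⟩
      · intro j
        ext a
        simp only [Set.mem_inter_iff, Set.mem_diff]
        constructor
        · rintro ⟨haπ, haAct, haNA⟩
          refine ⟨?_, haAct, haNA⟩
          by_contra haπ''
          by_cases haB : a ∈ B
          · -- a ∈ B \ A, use simLE B
            have hd : (a, j) ∈ symDiff B π'' π := ⟨haB, Or.inr ⟨haπ, haπ''⟩⟩
            obtain ⟨_, hd2⟩ := hsim hd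
            rcases hd2 with ⟨h1, h2⟩ | ⟨h1, h2⟩
            · rcases h1 with h1 | h1
              · exact haNA (hpA j h1)
              · exact h2 h1.1
            · exact h2 (Or.inr ⟨h1, haB, haNA⟩)
          · have := hagree j
            have : a ∈ π'' j ∩ (E.Act \ B) := by
              rw [← this]; exact ⟨haπ, haAct, haB⟩
            exact haπ'' this.1
        · rintro ⟨haπ'', haAct, haNA⟩
          refine ⟨?_, haAct, haNA⟩
          by_contra haπ
          by_cases haB : a ∈ B
          · have hd : (a, j) ∈ symDiff B π'' π := ⟨haB, Or.inl ⟨haπ'', haπ⟩⟩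
            obtain ⟨_, hd2⟩ := hsim hd
            rcases hd2 with ⟨h1, h2⟩ | ⟨h1, h2⟩
            · rcases h1 with h1 | h1
              · exact haNA (hpA j h1)
              · exact haπ h1.1
            · exact h2 (Or.inr ⟨h1, haB, haNA⟩)
          · have h := hagree j
            have : a ∈ π j ∩ (E.Act \ B) := by
              rw [h]; exact ⟨haπ'', haAct, haB⟩
            exact haπ this.1
    · intro j
      ext a
      simp only [Set.mem_inter_iff, Set.mem_union, Set.mem_diff]
      constructor
      · rintro ⟨haπ, haB, haNA⟩
        exact ⟨Or.inr ⟨haπ, haB, haNA⟩, haB, haNA⟩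
      · rintro ⟨h1, haB, haNA⟩
        rcases h1 with h1 | h1
        · exact absurd (hpA j h1) haNA
        · exact ⟨h1.1, haB, haNA⟩
    · funext j
      ext a
      simp only [restrictTo, Set.mem_inter_iff, Set.mem_union, Set.mem_diff]
      constructor
      · rintro ⟨h1, haA⟩
        rcases h1 with h1 | h1
        · exact h1
        · exact absurd haA h1.2.2
      · intro h
        exact ⟨Or.inl h, hpA j h⟩
  · rintro ⟨σ, ⟨⟨hσB, hσ⟩, hagreeBA⟩, rfl⟩
    refine ⟨fun j => Set.inter_subset_right, ?_⟩
    intro π'' hπ'' hsim hagree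
    refine hσ π'' hπ'' ?_ ?_
    · rintro ⟨a, j⟩ ⟨haB, hd⟩
      by_cases haA : a ∈ A
      · have h2 := hsim ⟨haA, hd⟩
        obtain ⟨_, hd2⟩ := h2
        refine ⟨haB, ?_⟩
        rcases hd2 with ⟨h1, h2⟩ | ⟨h1, h2⟩
        · exact Or.inl ⟨h1.1, h2⟩
        · exact Or.inr ⟨h1, fun h => h2 ⟨h, haA⟩⟩
      · exfalso
        have h := hagree j
        have hBA : a ∈ E.Act \ A := ⟨hB haB, haA⟩
        rcases hd with ⟨h1, h2⟩ | ⟨h1, h2⟩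
        · have : a ∈ π j ∩ (E.Act \ A) := by
            rw [h]; exact ⟨h1, hBA⟩
          exact h2 this.1
        · have : a ∈ π'' j ∩ (E.Act \ A) := by
            rw [← h]; exact ⟨h1, hBA⟩
          exact h2 this.1
    · intro j
      ext a
      have h := hagree j
      simp only [Set.mem_inter_iff, Set.mem_diff] at *
      constructor
      · rintro ⟨haπ, haAct, haNB⟩
        have : a ∈ π j ∩ (E.Act \ A) := ⟨haπ, haAct, fun h => haNB (hAB h)⟩
        rw [h] at this
        exact ⟨this.1, haAct, haNB⟩
      · rintro ⟨haπ'', haAct, haNB⟩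
        have : a ∈ π'' j ∩ (E.Act \ A) := ⟨haπ'', haAct, fun h => haNB (hAB h)⟩
        rw [← h] at this
        exact ⟨this.1, haAct, haNB⟩
end

section
/- Let 𝓔 = (T, Ω, Act) be an extended transition system, a an agent, π ∈ Π(T), i ∈ ℕ, ψ an effect, and A ⊆ B ⊆ Act. If there exists a set T_B ⊆ (2^B)^ω such that T_B = Cause(ψ, π′, i, B) for every trace π′ ∈ Π(T) that is a-indistinguishable from π up to time i, then there exists a set T_A ⊆ (2^A)^ω such that T_A = Cause(ψ, π′, i, A) for every trace π′ ∈ Π(T) that is a-indistinguishable from π up to time i. (Knowledge of the cause over a larger action set implies knowledge of the cause over any smaller action set.) -/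
variable {S AP AG : Type*}

namespace ExtTransSys

lemma mem_symDiff_iff {A : Set AP} {x y : ℕ → Set AP} {p : AP} {j : ℕ} :
    (p, j) ∈ symDiff A x y ↔ p ∈ A ∧ ((p ∈ x j ∧ p ∉ y j) ∨ (p ∈ y j ∧ p ∉ x j)) := by
  simp [symDiff]

lemma symDiff_mono {A B : Set AP} (hAB : A ⊆ B) (x y : ℕ → Set AP) :
    symDiff A x y ⊆ symDiff B x y := fun _ hq => ⟨hAB hq.1, hq.2⟩

/-- `symDiff` of the `B`-extension of an `A`-trace equals the `A`-`symDiff`. -/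
lemma symDiff_ext {A B : Set AP} (hAB : A ⊆ B) (τ ρ : ℕ → Set AP)
    (hτ : ∀ j, τ j ⊆ A) :
    symDiff B (fun j => τ j ∪ (ρ j ∩ (B \ A))) ρ = symDiff A τ ρ := by
  ext ⟨p, j⟩
  have h1 : p ∈ τ j → p ∈ A := fun h => hτ j h
  have h2 : p ∈ A → p ∈ B := fun h => hAB h
  simp only [symDiff, Set.mem_setOf_eq, Set.mem_union, Set.mem_diff, Set.mem_inter_iff]
  tauto

/-- `Cause` is downward closed with respect to the similarity order. -/
lemma cause_downward (E : ExtTransSys S AP AG) (ψ : (ℕ → Set AP) → ℕ → Prop)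
    (ρ : ℕ → Set AP) (i : ℕ) (B : Set AP) {σ σ' : ℕ → Set AP}
    (hσ'B : ∀ j, σ' j ⊆ B) (hle : symDiff B σ' ρ ⊆ symDiff B σ ρ)
    (hσ : σ ∈ E.Cause ψ ρ i B) : σ' ∈ E.Cause ψ ρ i B :=
  ⟨hσ'B, fun π'' hπ'' hsim hagree => hσ.2 π'' hπ'' (hsim.trans hle) hagree⟩

/-- An `A`-trace is an `A`-cause iff its `B`-extension is a `B`-cause. -/
lemma cause_extend (E : ExtTransSys S AP AG) (ψ : (ℕ → Set AP) → ℕ → Prop)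
    (ρ : ℕ → Set AP) (i : ℕ) {A B : Set AP} (hAB : A ⊆ B) (hB : B ⊆ E.Act)
    {τ : ℕ → Set AP} (hτ : ∀ j, τ j ⊆ A) :
    τ ∈ E.Cause ψ ρ i A ↔ (fun j => τ j ∪ (ρ j ∩ (B \ A))) ∈ E.Cause ψ ρ i B := by
  have hext := symDiff_ext hAB τ ρ hτ
  have hsubB : ∀ j, τ j ∪ (ρ j ∩ (B \ A)) ⊆ B := fun j =>
    Set.union_subset (fun p hp => hAB (hτ j hp))
      (Set.inter_subset_right.trans Set.diff_subset)
  constructor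
  · rintro ⟨-, h⟩
    refine ⟨hsubB, fun π'' hT hsim hag => ?_⟩
    have hsim' : symDiff B π'' ρ ⊆ symDiff A τ ρ := by
      intro q hq; rw [← hext]; exact hsim hq
    have key : ∀ j p, p ∈ E.Act → p ∉ A → (p ∈ ρ j ↔ p ∈ π'' j) := by
      intro j p hpAct hpA
      by_cases hpB : p ∈ B
      · constructor
        · intro hρ; by_contra hπ''
          exact hpA (mem_symDiff_iff.mp (hsim' (mem_symDiff_iff.mpr
            ⟨hpB, Or.inr ⟨hρ, hπ''⟩⟩))).1
        · intro hπ''; by_contra hρ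
          exact hpA (mem_symDiff_iff.mp (hsim' (mem_symDiff_iff.mpr
            ⟨hpB, Or.inl ⟨hπ'', hρ⟩⟩))).1
      · have heq := Set.ext_iff.mp (hag j) p
        simp only [Set.mem_inter_iff, Set.mem_diff] at heq
        constructor
        · intro hρ; exact (heq.mp ⟨hρ, hpAct, hpB⟩).1
        · intro hπ''; exact (heq.mpr ⟨hπ'', hpAct, hpB⟩).1
    refine h π'' hT (fun q hq => hsim' (symDiff_mono hAB _ _ hq)) ?_
    intro j
    ext p
    simp only [Set.mem_inter_iff, Set.mem_diff]
    constructor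
    · rintro ⟨h1, h2, h3⟩; exact ⟨(key j p h2 h3).mp h1, h2, h3⟩
    · rintro ⟨h1, h2, h3⟩; exact ⟨(key j p h2 h3).mpr h1, h2, h3⟩
  · rintro ⟨-, h⟩
    refine ⟨hτ, fun π'' hT hsimA hagA => ?_⟩
    refine h π'' hT ?_ ?_
    · -- simLE B : symDiff B π'' ρ ⊆ symDiff B σ ρ
      intro ⟨p, j⟩ hq
      obtain ⟨hpB, hd⟩ := mem_symDiff_iff.mp hq
      rw [hext]
      by_cases hpA : p ∈ A
      · exact hsimA (mem_symDiff_iff.mpr ⟨hpA, hd⟩)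
      · exfalso
        have heq := Set.ext_iff.mp (hagA j) p
        simp only [Set.mem_inter_iff, Set.mem_diff] at heq
        rcases hd with ⟨h1, h2⟩ | ⟨h1, h2⟩
        · exact h2 (heq.mpr ⟨h1, hB hpB, hpA⟩).1
        · exact h2 (heq.mp ⟨h1, hB hpB, hpA⟩).1
    · -- agreeOn (Act \ B)
      intro j
      ext p
      have heq := Set.ext_iff.mp (hagA j) p
      simp only [Set.mem_inter_iff, Set.mem_diff] at heq ⊢
      constructor
      · rintro ⟨h1, h2, h3⟩
        exact ⟨(heq.mp ⟨h1, h2, fun hp => h3 (hAB hp)⟩).1, h2, h3⟩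
      · rintro ⟨h1, h2, h3⟩
        exact ⟨(heq.mpr ⟨h1, h2, fun hp => h3 (hAB hp)⟩).1, h2, h3⟩

/-- If the `B`-causes of `ρ` and `ρ'` coincide, membership in the `A`-cause transfers. -/
lemma cause_transfer (E : ExtTransSys S AP AG) (ψ : (ℕ → Set AP) → ℕ → Prop)
    (i : ℕ) {A B : Set AP} (hAB : A ⊆ B) (hB : B ⊆ E.Act) {ρ ρ' : ℕ → Set AP}
    (hEq : E.Cause ψ ρ i B = E.Cause ψ ρ' i B) {τ : ℕ → Set AP}
    (hτ : τ ∈ E.Cause ψ ρ i A) : τ ∈ E.Cause ψ ρ' i A := by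
  have hτA : ∀ j, τ j ⊆ A := hτ.1
  have h1 : (fun j => τ j ∪ (ρ j ∩ (B \ A))) ∈ E.Cause ψ ρ' i B := by
    rw [← hEq]; exact (E.cause_extend ψ ρ i hAB hB hτA).mp hτ
  have h3 : (fun j => τ j ∪ (ρ' j ∩ (B \ A))) ∈ E.Cause ψ ρ' i B := by
    refine E.cause_downward ψ ρ' i B (σ := fun j => τ j ∪ (ρ j ∩ (B \ A)))
      (fun j => Set.union_subset (fun p hp => hAB (hτA j hp))
        (Set.inter_subset_right.trans Set.diff_subset)) ?_ h1
    rw [symDiff_ext hAB τ ρ' hτA]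
    intro ⟨p, j⟩ hq
    obtain ⟨hpA, hd⟩ := mem_symDiff_iff.mp hq
    have hpnBA : p ∉ ρ j ∩ (B \ A) := fun h => h.2.2 hpA
    refine mem_symDiff_iff.mpr ⟨hAB hpA, ?_⟩
    rcases hd with ⟨h1, h2⟩ | ⟨h1, h2⟩
    · exact Or.inl ⟨Or.inl h1, h2⟩
    · exact Or.inr ⟨h1, fun h => h.elim h2 (fun h' => hpnBA h')⟩
  exact (E.cause_extend ψ ρ' i hAB hB hτA).mpr h3

end ExtTransSys

/-- knowledge of the cause over a larger action set `B` implies knowledge of the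
cause over any smaller action set `A ⊆ B`. -/
theorem knowledge_of_cause_mono [Finite S] [Finite AP] [Finite AG]
    (E : ExtTransSys S AP AG) (a : AG) (ψ : (ℕ → Set AP) → ℕ → Prop)
    (π : ℕ → Set AP) (hπ : π ∈ E.toTransSys.Traces) (i : ℕ)
    (A B : Set AP) (hAB : A ⊆ B) (hB : B ⊆ E.Act)
    (hKB : ∃ TB : Set (ℕ → Set AP), (∀ τ ∈ TB, ∀ j, τ j ⊆ B) ∧
      ∀ π' ∈ E.toTransSys.Traces, E.Indist a i π π' → TB = E.Cause ψ π' i B) :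
    ∃ TA : Set (ℕ → Set AP), (∀ τ ∈ TA, ∀ j, τ j ⊆ A) ∧
      ∀ π' ∈ E.toTransSys.Traces, E.Indist a i π π' → TA = E.Cause ψ π' i A := by
  obtain ⟨TB, hTBsub, hTB⟩ := hKB
  refine ⟨E.Cause ψ π i A, fun τ hτ => hτ.1, fun π' hπ' hind => ?_⟩
  have hB1 : TB = E.Cause ψ π i B := hTB π hπ (fun j _ => rfl)
  have hB2 : TB = E.Cause ψ π' i B := hTB π' hπ' hind
  have hEq : E.Cause ψ π i B = E.Cause ψ π' i B := hB1 ▸ hB2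
  exact Set.Subset.antisymm
    (fun τ hτ => E.cause_transfer ψ i hAB hB hEq hτ)
    (fun τ hτ => E.cause_transfer ψ i hAB hB hEq.symm hτ)
end

section
/- (Proposition: explanations imply knowledge.) Let 𝓔 = (T, Ω, Act) be a deterministic extended transition system, a an agent, π ∈ Π(T), i ∈ ℕ, A ⊆ Act, and ψ an effect. Suppose π,i ⊨ ψ and there exists T₀ ⊆ (2^A)^ω such that T₀ = Cause(ψ, π′, i, A) for every trace π′ ∈ Π(T) that is a-indistinguishable from π up to i. Then agent a knows ψ at (π, i): every trace π′ ∈ Π(T) that is a-indistinguishable from π up to i satisfies π′,i ⊨ ψ. -/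
variable {S AP AG : Type*}

private lemma det_trace_eq {S AP AG : Type*} (E : ExtTransSys S AP AG)
    (hdet : E.Deterministic) (π π'' : ℕ → Set AP)
    (hπ : π ∈ E.toTransSys.Traces) (hπ'' : π'' ∈ E.toTransSys.Traces)
    (h : ∀ j, π j ∩ E.Act = π'' j ∩ E.Act) : π = π'' := by
  obtain ⟨ρ, hρ0, hρp, hρt⟩ := hπ
  obtain ⟨σ, hσ0, hσp, hσt⟩ := hπ''
  obtain ⟨⟨s₀, hs₀⟩, huniq⟩ := hdet
  have hstates : ∀ j, ρ j = σ j := by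
    intro j
    induction j with
    | zero =>
      rw [hs₀] at hρ0 hσ0
      simp only [Set.mem_singleton_iff] at hρ0 hσ0
      rw [hρ0, hσ0]
    | succ j ih =>
      have hlab : E.label (ρ j) (ρ (j+1)) ∩ E.Act = E.label (σ j) (σ (j+1)) ∩ E.Act := by
        have := h j
        rw [hρt, hσt] at this
        exact this
      obtain ⟨s', hs', hu⟩ := huniq (ρ j) (E.label (ρ j) (ρ (j+1)) ∩ E.Act)
        Set.inter_subset_right
      have h1 : ρ (j+1) = s' := hu _ ⟨hρp j, rfl⟩
      have h2 : σ (j+1) = s' := by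
        apply hu
        rw [← ih] at hlab
        exact ⟨by rw [ih]; exact hσp j, hlab.symm⟩
      rw [h1, h2]
  rw [hρt, hσt]
  funext j
  unfold TransSys.traceOf
  rw [hstates j, hstates (j+1)]

/-- in a deterministic system, explanations imply knowledge of the effect. -/
theorem explanation_implies_knowledge [Finite S] [Finite AP] [Finite AG]
    (E : ExtTransSys S AP AG) (hdet : E.Deterministic) (a : AG)
    (π : ℕ → Set AP) (hπ : π ∈ E.toTransSys.Traces) (i : ℕ)
    (A : Set AP) (hA : A ⊆ E.Act) (ψ : (ℕ → Set AP) → ℕ → Prop)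
    (hψ : ψ π i)
    (hK : ∃ T₀ : Set (ℕ → Set AP), (∀ τ ∈ T₀, ∀ j, τ j ⊆ A) ∧
      ∀ π' ∈ E.toTransSys.Traces, E.Indist a i π π' → T₀ = E.Cause ψ π' i A) :
    ∀ π' ∈ E.toTransSys.Traces, E.Indist a i π π' → ψ π' i := by
  obtain ⟨T₀, hT₀sub, hT₀⟩ := hK
  set τ : ℕ → Set AP := fun j => π j ∩ A with hτdef
  have hrefl : E.Indist a i π π := fun j _ => rfl
  have hτCause : τ ∈ E.Cause ψ π i A := by
    refine ⟨fun j => Set.inter_subset_right, ?_⟩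
    intro π'' hπ''T hsim hagree
    have hsd : symDiff A τ π = ∅ := by
      ext ⟨p, j⟩
      simp only [symDiff, hτdef, Set.mem_setOf_eq, Set.mem_union, Set.mem_diff,
        Set.mem_inter_iff, Set.mem_empty_iff_false, iff_false]
      tauto
    have hsd'' : symDiff A π'' π = ∅ := Set.subset_empty_iff.mp (hsd ▸ hsim)
    have hact : ∀ j, π j ∩ E.Act = π'' j ∩ E.Act := by
      intro j
      ext p
      simp only [Set.mem_inter_iff]
      constructor
      · rintro ⟨hp, hpAct⟩
        refine ⟨?_, hpAct⟩
        by_cases hpA : p ∈ A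
        · by_contra hpn
          have : (p, j) ∈ symDiff A π'' π := ⟨hpA, Or.inr ⟨hp, hpn⟩⟩
          rw [hsd''] at this; exact this
        · have := hagree j
          have hmem : p ∈ π j ∩ (E.Act \ A) := ⟨hp, hpAct, hpA⟩
          rw [this] at hmem; exact hmem.1
      · rintro ⟨hp, hpAct⟩
        refine ⟨?_, hpAct⟩
        by_cases hpA : p ∈ A
        · by_contra hpn
          have : (p, j) ∈ symDiff A π'' π := ⟨hpA, Or.inl ⟨hp, hpn⟩⟩
          rw [hsd''] at this; exact this
        · have := hagree j
          have hmem : p ∈ π'' j ∩ (E.Act \ A) := ⟨hp, hpAct, hpA⟩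
          rw [← this] at hmem; exact hmem.1
    have : π = π'' := det_trace_eq E hdet π π'' hπ hπ''T hact
    rw [← this]; exact hψ
  intro π' hπ' hind
  have h1 : T₀ = E.Cause ψ π i A := hT₀ π hπ hrefl
  have h2 : T₀ = E.Cause ψ π' i A := hT₀ π' hπ' hind
  have hτ' : τ ∈ E.Cause ψ π' i A := by rw [← h2, h1]; exact hτCause
  obtain ⟨_, hmain⟩ := hτ'
  apply hmain π' hπ'
  · intro q hq
    obtain ⟨hqA, hq⟩ := hq
    simp only [Set.mem_union, Set.mem_diff] at hq
    rcases hq with ⟨h1', h2'⟩ | ⟨h1', h2'⟩ <;> exact absurd h1' h2'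
  · intro j; rfl
end

section
/- (Cause as largest downward-closed set.) Let 𝓔 = (T, Ω, Act) be an extended transition system, π a trace, i ∈ ℕ, A ⊆ Act, and ψ an effect. Then Cause(ψ, π, i, A) is the largest set C ⊆ (2^A)^ω satisfying both: (1) C is downward closed with respect to ≤^A_π (ρ ∈ C and ρ′ ≤^A_π ρ with ρ′ ∈ (2^A)^ω imply ρ′ ∈ C), and (2) every trace π″ ∈ Π(T) with π =_{Act∖A} π″ and π″|_A ∈ C satisfies π″,i ⊨ ψ. That is, Cause(ψ, π, i, A) itself has properties (1) and (2), and every set C ⊆ (2^A)^ω with properties (1) and (2) is contained in Cause(ψ, π, i, A). -/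
variable {S AP AG : Type*}

/-- `Cause(ψ, π, i, A)` is the largest subset of `(2^A)^ω` that is downward
closed w.r.t. `≤^A_π` and such that every system trace agreeing with `π` outside `A` whose
`A`-projection lies in the set satisfies the effect. -/
theorem cause_largest_downward_closed [Finite S] [Finite AP] [Finite AG]
    (E : ExtTransSys S AP AG) (ψ : (ℕ → Set AP) → ℕ → Prop)
    (π : ℕ → Set AP) (i : ℕ) (A : Set AP) (hA : A ⊆ E.Act) :
    ((∀ ρ ∈ E.Cause ψ π i A, ∀ ρ' : ℕ → Set AP, (∀ j, ρ' j ⊆ A) → simLE A π ρ' ρ →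
        ρ' ∈ E.Cause ψ π i A) ∧
      (∀ π'' ∈ E.toTransSys.Traces, agreeOn (E.Act \ A) π π'' →
        restrictTo A π'' ∈ E.Cause ψ π i A → ψ π'' i)) ∧
    (∀ C : Set (ℕ → Set AP), (∀ ρ ∈ C, ∀ j, ρ j ⊆ A) →
      (∀ ρ ∈ C, ∀ ρ' : ℕ → Set AP, (∀ j, ρ' j ⊆ A) → simLE A π ρ' ρ → ρ' ∈ C) →
      (∀ π'' ∈ E.toTransSys.Traces, agreeOn (E.Act \ A) π π'' →
        restrictTo A π'' ∈ C → ψ π'' i) →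
      C ⊆ E.Cause ψ π i A) := by
  have hsd : ∀ π'' : ℕ → Set AP, symDiff A (restrictTo A π'') π = symDiff A π'' π := by
    intro π''
    ext ⟨a, j⟩
    simp only [symDiff, restrictTo, Set.mem_setOf_eq, Set.mem_union, Set.mem_diff,
      Set.mem_inter_iff]
    constructor
    · rintro ⟨hA, h⟩; exact ⟨hA, by tauto⟩
    · rintro ⟨hA, h⟩; exact ⟨hA, by tauto⟩
  refine ⟨⟨?_, ?_⟩, ?_⟩
  · rintro ρ ⟨hsub, hρ⟩ ρ' hsub' hle
    refine ⟨hsub', fun π'' hπ'' hle' hag => hρ π'' hπ'' (hle'.trans hle) hag⟩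
  · rintro π'' hπ'' hag ⟨hsub, h⟩
    refine h π'' hπ'' ?_ hag
    rw [simLE, hsd]
  · intro C h1 h2 h3 ρ hρ
    refine ⟨h1 ρ hρ, fun π'' hπ'' hle hag => ?_⟩
    refine h3 π'' hπ'' hag ?_
    refine h2 ρ hρ _ (fun j => Set.inter_subset_right) ?_
    rw [simLE, hsd]
    exact hle
end
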